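/- With g(x) = ⌊(x+24)/13⌋, one has g⁵(2403) = 2; consequently, if f^ω(0) contains a factor X₁YX₂ with X₁ ∼ X₂, exponent |X₁YX₂|/|X₁Y| > 1.713, and |X₁| ≤ 1000, then f⁵(0) (up to the cyclic shift σ) contains such a factor. -/

import Mathlib

/-- The image of 0 under the morphism: 0740103050260. -/
def f0 : List (Fin 8) := [0,7,4,0,1,0,3,0,5,0,2,6,0]

/-- The cyclic shift morphism σ, sending each letter a to a+1 (mod 8). -/
def sigmaW (w : List (Fin 8)) : List (Fin 8) := w.map (· + 1)

/-- The image of a letter under the cyclic morphism f: f(a) = σ^a(f(0)). -/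
def fL (a : Fin 8) : List (Fin 8) := f0.map (· + a)

/-- The morphism f extended to words. -/
def fW (w : List (Fin 8)) : List (Fin 8) := w.flatMap fL

/-- f^n(0). -/
def fIter (n : ℕ) : List (Fin 8) := fW^[n] [0]

/-- u is a factor of the fixed point f^ω(0): since f^n(0) is a prefix of
f^{n+1}(0), this holds iff u is a factor of some f^n(0). -/
def FactorFP (u : List (Fin 8)) : Prop := ∃ n, u <:+: fIter n

/-- A letter of Σ ∪ {ε} viewed as a word. -/
def optL (a : Option (Fin 8)) : List (Fin 8) := a.elim [] (fun x => [x])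

/-- The image under f of an element of Σ ∪ {ε}. -/
def imgF (a : Option (Fin 8)) : List (Fin 8) := a.elim [] fL

/-- g(x) = ⌊(x+24)/13⌋. -/
def g (x : ℕ) : ℕ := (x + 24) / 13

/-! ### Auxiliary lemmas -/

lemma fW_append (x y : List (Fin 8)) : fW (x ++ y) = fW x ++ fW y := by
  simp [fW]

lemma fL_length (a : Fin 8) : (fL a).length = 13 := by simp [fL, f0]

lemma fW_length (w : List (Fin 8)) : (fW w).length = 13 * w.length := by
  induction w with
  | nil => simp [fW]
  | cons a w ih =>
    show (fW ([a] ++ w)).length = _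
    rw [fW_append, List.length_append, ih]
    simp [fW, fL_length, List.length_cons]; ring

lemma fL_shift (a s : Fin 8) : fL (a + s) = (fL a).map (· + s) := by
  simp only [fL, List.map_map]
  congr 1
  funext x
  simp [add_assoc]

lemma fW_shift (w : List (Fin 8)) (s : Fin 8) :
    fW (w.map (· + s)) = (fW w).map (· + s) := by
  induction w with
  | nil => simp [fW]
  | cons a w ih =>
    show fW ((a+s) :: w.map (· + s)) = _
    have h1 : fW ((a+s) :: w.map (· + s)) = fL (a+s) ++ fW (w.map (· + s)) := by
      simp [fW]
    have h2 : fW (a :: w) = fL a ++ fW w := by simp [fW]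
    rw [h1, h2, ih, fL_shift, List.map_append]

lemma fW_infix {u w : List (Fin 8)} (h : u <:+: w) : fW u <:+: fW w := by
  obtain ⟨s, t, rfl⟩ := h
  exact ⟨fW s, fW t, by rw [← fW_append, ← fW_append]⟩

lemma take_drop_infix (L : List (Fin 8)) (a n : ℕ) : (L.drop a).take n <:+: L :=
  (List.take_prefix _ _).isInfix.trans (List.drop_suffix a L).isInfix

lemma fIter_succ (n : ℕ) : fIter (n+1) = fW (fIter n) :=
  Function.iterate_succ_apply' fW n [0]

lemma fIter_add4 (n : ℕ) : fIter (n+4) = fW (fW (fW (fW (fIter n)))) := by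
  rw [show n+4 = (n+3)+1 from rfl, fIter_succ,
      show n+3 = (n+2)+1 from rfl, fIter_succ,
      show n+2 = (n+1)+1 from rfl, fIter_succ, fIter_succ]

lemma fW_zero : fW [0] = f0 := by decide

lemma fWn_append (m : ℕ) (x y : List (Fin 8)) :
    fW^[m] (x ++ y) = fW^[m] x ++ fW^[m] y := by
  induction m generalizing x y with
  | zero => simp
  | succ m ih =>
    rw [Function.iterate_succ_apply, Function.iterate_succ_apply,
        Function.iterate_succ_apply, fW_append, ih]

lemma fIter_prefix_succ (n : ℕ) : fIter n <+: fIter (n+1) := by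
  have : fIter (n+1) = fW^[n] (fW [0]) := Function.iterate_succ_apply fW n [0]
  rw [this, fW_zero, show f0 = [0] ++ [7,4,0,1,0,3,0,5,0,2,6,0] from rfl,
      fWn_append]
  exact ⟨_, rfl⟩

lemma fIter_prefix (n k : ℕ) : fIter n <+: fIter (n+k) := by
  induction k with
  | zero => exact List.prefix_rfl
  | succ k ih => exact ih.trans (fIter_prefix_succ (n+k))

/-- Desubstitution lemma. -/
lemma desub {u w : List (Fin 8)} (h : u <:+: fW w) :
    ∃ v, v <:+: w ∧ u <:+: fW v ∧ 13 * v.length ≤ u.length + 24 := by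
  rcases eq_or_ne u [] with rfl | hne
  · exact ⟨[], ⟨w, [], by simp⟩, by simp, by simp⟩
  obtain ⟨s, t, hst⟩ := h
  set i := s.length / 13 with hi
  set r := s.length % 13 with hr
  set k := (r + u.length + 12) / 13 with hk
  have hu : 0 < u.length := List.length_pos_iff.2 hne
  have hlen : s.length + (u.length + t.length) = 13 * w.length := by
    have := congrArg List.length hst
    simpa [fW_length] using this
  have hiw : i ≤ w.length := by omega
  set v := (w.drop i).take k with hv
  have hm : v.length = min k (w.length - i) := by simp [hv]
  refine ⟨v, take_drop_infix _ _ _, ?_, by omega⟩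
  have hbound : r + u.length ≤ 13 * v.length := by
    rw [hm]
    rcases Nat.le_total k (w.length - i) with hle | hle
    · rw [min_eq_left hle]; omega
    · rw [min_eq_right hle]; omega
  have hsplit : fW w = fW (w.take i) ++ fW (w.drop i) := by
    rw [← fW_append, List.take_append_drop]
  have htlen : (fW (w.take i)).length = 13 * i := by
    rw [fW_length, List.length_take, min_eq_left hiw]
  have hu1 : u = ((fW (w.drop i)).drop r).take u.length := by
    have e1 : (fW w).drop s.length = u ++ t := by
      rw [← hst, List.append_assoc, List.drop_left]
    have e2 : (fW w).drop s.length = (fW (w.drop i)).drop r := by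
      rw [hsplit]
      have : s.length = (fW (w.take i)).length + r := by rw [htlen]; omega
      rw [this, List.drop_length_add_append]
    rw [← e2, e1, List.take_left]
  have hpre : fW v = (fW (w.drop i)).take (13 * v.length) := by
    have : w.drop i = v ++ (w.drop i).drop k := by
      rw [hv, List.take_append_drop]
    rw [this, fW_append]
    rw [List.take_append_of_le_length (by rw [fW_length])]
    rw [List.take_of_length_le (by rw [fW_length])]
  have : u = ((fW v).drop r).take u.length := by
    rw [hpre, List.drop_take, List.take_take]
    rw [min_eq_left (by omega)]
    exact hu1
  rw [this]
  exact take_drop_infix _ _ _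

lemma pair_of_block {a b : Fin 8} {c : Fin 8} (h : [a,b] <:+: fL c) :
    ∃ p q : Fin 8, [p,q] <:+: f0 ∧ q - p = b - a := by
  refine ⟨a + (-c), b + (-c), ?_, by abel⟩
  have := h.map (· + (-c))
  simpa [fL, List.map_map, add_neg_cancel_right] using this

lemma pair_lemma : ∀ n (a b : Fin 8), [a,b] <:+: fIter n →
    ∃ p q : Fin 8, [p,q] <:+: f0 ∧ q - p = b - a := by
  intro n
  induction n with
  | zero =>
    intro a b h
    have := h.length_le
    simp [fIter] at this
  | succ n ih =>
    intro a b h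
    rw [fIter_succ] at h
    obtain ⟨v, hvw, hinf, hlen⟩ := desub h
    match v, hvw, hinf, hlen with
    | [], _, hinf, _ =>
      have := hinf.length_le
      simp [fW] at this
    | [c], _, hinf, _ =>
      exact pair_of_block (by simpa [fW] using hinf)
    | [c,d], hvw, hinf, _ =>
      have hfw : fW [c,d] = fL c ++ fL d := by simp [fW]
      rw [hfw] at hinf
      obtain ⟨s, t, hst⟩ := hinf
      set j := s.length with hj
      have hlen2 : j + (2 + t.length) = 26 := by
        have := congrArg List.length hst
        simp [fL_length] at this
        omega
      have hab : [a,b] = ((fL c ++ fL d).drop j).take 2 := by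
        have e1 : (fL c ++ fL d).drop j = [a,b] ++ t := by
          rw [← hst, List.append_assoc, List.drop_left]
        rw [e1]
        simp
      rcases lt_trichotomy j 12 with hj11 | hj12 | hj13
      · apply pair_of_block (c := c)
        rw [hab, List.drop_append]
        rw [List.take_append_of_le_length (by rw [List.length_drop, fL_length]; omega)]
        exact take_drop_infix _ _ _
      · have hdrop : (fL c ++ fL d).drop j = [c] ++ fL d := by
          rw [List.drop_append, fL_length, hj12]
          have e2 : (fL c).drop 12 = [c] := by
            rw [fL, ← List.map_drop]
            simp [f0]
          simp [e2]
        have e3 : (fL d).take 1 = [d] := by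
          rw [fL, ← List.map_take]
          simp [f0]
        have : [a, b] = [c, d] := by
          rw [hab, hdrop, List.take_append]
          simp [e3]
        simp only [List.cons.injEq] at this
        obtain ⟨rfl, rfl, -⟩ := this
        exact ih a b hvw
      · apply pair_of_block (c := d)
        rw [hab, List.drop_append,
          List.drop_eq_nil_of_le (by rw [fL_length]; omega), List.nil_append]
        exact take_drop_infix _ _ _
    | (x :: y :: z :: w), _, _, hlen =>
      exfalso
      simp at hlen
      omega

theorem stmt14 :
    g^[5] 2403 = 2 ∧
    (∀ X₁ Y X₂ : List (Fin 8), FactorFP (X₁ ++ Y ++ X₂) → X₁.Perm X₂ →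
      (1.713 : ℝ) < ((X₁ ++ Y ++ X₂).length : ℝ) / ((X₁ ++ Y).length : ℝ) →
      X₁.length ≤ 1000 →
      ∃ X₁' Y' X₂' : List (Fin 8), X₁' ++ Y' ++ X₂' <:+: fIter 5 ∧
        X₁'.Perm X₂' ∧
        (1.713 : ℝ) < ((X₁' ++ Y' ++ X₂').length : ℝ) / ((X₁' ++ Y').length : ℝ) ∧
        X₁'.length ≤ 1000) := by
  constructor
  · decide
  intro X₁ Y X₂ hfac hperm hratio hlenX
  have hk2 : X₂.length = X₁.length := hperm.length_eq.symm
  -- nondegeneracy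
  have hkm : 0 < (X₁ ++ Y).length := by
    rcases Nat.eq_zero_or_pos (X₁ ++ Y).length with h | h
    · rw [h] at hratio
      norm_num at hratio
    · exact h
  -- total length bound
  have hcross : (1.713 : ℝ) * ((X₁ ++ Y).length : ℝ) < ((X₁ ++ Y ++ X₂).length : ℝ) := by
    have hpos : (0:ℝ) < ((X₁ ++ Y).length : ℝ) := by exact_mod_cast hkm
    rw [lt_div_iff₀ hpos] at hratio
    linarith
  have hcn : 1713 * (X₁ ++ Y).length < 1000 * (X₁ ++ Y ++ X₂).length := by
    have : (1713 : ℝ) * ((X₁ ++ Y).length : ℝ) < 1000 * ((X₁ ++ Y ++ X₂).length : ℝ) := by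
      norm_num at hcross ⊢
      linarith
    exact_mod_cast this
  have htot : (X₁ ++ Y ++ X₂).length ≤ 2402 := by
    simp only [List.length_append, hk2] at hcn ⊢
    omega
  -- desubstitute four times
  obtain ⟨n, hn⟩ := hfac
  have h4 : X₁ ++ Y ++ X₂ <:+: fIter (n+4) :=
    hn.trans (fIter_prefix n 4).isInfix
  rw [fIter_add4] at h4
  obtain ⟨v1, hv1w, hv1, hl1⟩ := desub h4
  obtain ⟨v2, hv2w, hv2, hl2⟩ := desub hv1w
  obtain ⟨v3, hv3w, hv3, hl3⟩ := desub hv2w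
  obtain ⟨v4, hv4w, hv4, hl4⟩ := desub hv3w
  have hu4 : X₁ ++ Y ++ X₂ <:+: fW (fW (fW (fW v4))) :=
    hv1.trans (fW_infix (hv2.trans (fW_infix (hv3.trans (fW_infix hv4)))))
  have hv4len : v4.length ≤ 2 := by omega
  have hupos : 0 < (X₁ ++ Y ++ X₂).length :=
    hkm.trans_le ((X₁ ++ Y).prefix_append X₂).length_le
  -- find the shift s such that (X₁++Y++X₂).map (·+s) is a factor of fIter 5
  have key : ∃ s : Fin 8, (X₁ ++ Y ++ X₂).map (· + s) <:+: fIter 5 := by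
    match v4, hv4w, hu4, hv4len with
    | [], _, hu4, _ =>
      exfalso
      have hnil : fW (fW (fW (fW ([] : List (Fin 8))))) = [] := rfl
      rw [hnil] at hu4
      have := hu4.length_le
      simp only [List.length_nil] at this
      omega
    | [c], _, hu4, _ =>
      refine ⟨-c, ?_⟩
      have h4e : fW (fW (fW (fW ([0] : List (Fin 8))))) = fIter 4 := by
        rw [show (4:ℕ) = 0 + 4 from rfl, fIter_add4]
        rfl
      have hc : fW (fW (fW (fW [c]))) = (fIter 4).map (· + c) := by
        have h0 : [c] = [(0:Fin 8)].map (· + c) := by simp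
        rw [h0, fW_shift, fW_shift, fW_shift, fW_shift, h4e]
      rw [hc] at hu4
      have hmm := hu4.map (· + (-c))
      have heq : ((fIter 4).map (· + c)).map (· + (-c)) = fIter 4 := by
        rw [List.map_map]
        simp [add_neg_cancel_right]
      rw [heq] at hmm
      have h45 : fIter 4 <+: fIter 5 := fIter_prefix 4 1
      exact hmm.trans h45.isInfix
    | [c,d], hv4w, hu4, _ =>
      obtain ⟨p, q, hpq, hdiff⟩ := pair_lemma n c d hv4w
      refine ⟨p - c, ?_⟩
      have hmap : [c,d].map (· + (p - c)) = [p,q] := by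
        simp only [List.map_cons, List.map_nil, List.cons.injEq, and_true]
        constructor
        · abel
        · rw [sub_eq_iff_eq_add.mp hdiff]; abel
      have hcomm : (fW (fW (fW (fW [c,d])))).map (· + (p - c))
          = fW (fW (fW (fW [p,q]))) := by
        rw [← hmap, ← fW_shift, ← fW_shift, ← fW_shift, ← fW_shift]
      have hpq5 : fW (fW (fW (fW [p,q]))) <:+: fIter 5 := by
        have h1 : [p,q] <:+: fIter 1 := by
          have : fIter 1 = f0 := by
            rw [show (1:ℕ) = 0 + 1 from rfl, fIter_succ]
            exact fW_zero
          rw [this]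
          exact hpq
        have := fW_infix (fW_infix (fW_infix (fW_infix h1)))
        rwa [← fIter_add4] at this
      exact (hu4.map (· + (p - c))).trans (hcomm ▸ hpq5)
  obtain ⟨s, hs⟩ := key
  refine ⟨X₁.map (· + s), Y.map (· + s), X₂.map (· + s), ?_, hperm.map _, ?_, ?_⟩
  · simpa [List.map_append] using hs
  · simpa [List.length_map] using hratio
  · simpa [List.length_map] using hlenX
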